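/- If m = 1, the unique function G̃ : [0,1] → ℝ satisfying (1/2)(z G̃'(z) + 1)(z G̃'(z) + 2) + ((1+z)/(2(1-z))) G̃(z) - 1 = 0 on (0,1) together with 0 ≤ G̃(z) ≤ 1 - z, is G̃ ≡ 0. -/

import Mathlib

theorem stmt_16 (G : ℝ → ℝ)
    (hdiff : DifferentiableOn ℝ G (Set.Ioo (0:ℝ) 1))
    (hcont : ContinuousOn G (Set.Icc (0:ℝ) 1))
    (heq : ∀ z ∈ Set.Ioo (0:ℝ) 1,
      (1/2) * (z * deriv G z + 1) * (z * deriv G z + 2)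
        + ((1+z) / (2*(1-z))) * G z - 1 = 0)
    (hbd : ∀ z ∈ Set.Icc (0:ℝ) 1, 0 ≤ G z ∧ G z ≤ 1 - z) :
    ∀ z ∈ Set.Icc (0:ℝ) 1, G z = 0 := by
  -- Step 1: key differential inequality
  have key : ∀ z ∈ Set.Ioo (0:ℝ) 1, G z + 3 * (z * deriv G z) ≤ 0 := by
    intro z hz
    obtain ⟨hz0, hz1⟩ := hz
    have hG0 := (hbd z ⟨hz0.le, hz1.le⟩).1
    have h := heq z ⟨hz0, hz1⟩
    have h1z : (0:ℝ) < 1 - z := by linarith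
    set p := z * deriv G z with hp
    have hc : ((1+z)/(2*(1-z))) * G z = 1 - (1/2)*(p+1)*(p+2) := by linarith
    rw [div_mul_eq_mul_div, div_eq_iff (by positivity)] at hc
    -- hc : (1+z) * G z = (1 - (1/2)*(p+1)*(p+2)) * (2*(1-z))
    nlinarith [sq_nonneg p, mul_nonneg hG0 hz0.le, mul_nonneg h1z.le (sq_nonneg p)]
  -- Step 2: F = z * G z ^ 3 is antitone on [0,1]
  set F : ℝ → ℝ := fun x => x * (G x)^3 with hF
  have hFc : ContinuousOn F (Set.Icc 0 1) :=
    (continuousOn_id).mul ((hcont.pow 3))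
  have hint : interior (Set.Icc (0:ℝ) 1) = Set.Ioo 0 1 := interior_Icc
  have hFd : ∀ x ∈ Set.Ioo (0:ℝ) 1,
      HasDerivAt F ((G x)^3 + x * (3 * (G x)^2 * deriv G x)) x := by
    intro x hx
    have hGx : DifferentiableAt ℝ G x :=
      (hdiff x hx).differentiableAt (isOpen_Ioo.mem_nhds hx)
    have := (hasDerivAt_id x).fun_mul (hGx.hasDerivAt.fun_pow 3)
    simpa using this
  have hanti : AntitoneOn F (Set.Icc (0:ℝ) 1) := by
    apply antitoneOn_of_deriv_nonpos (convex_Icc 0 1) hFc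
    · rw [hint]
      intro x hx
      exact (hFd x hx).differentiableAt.differentiableWithinAt
    · rw [hint]
      intro x hx
      rw [(hFd x hx).deriv]
      have hk := key x hx
      have hG0 := (hbd x ⟨hx.1.le, hx.2.le⟩).1
      nlinarith [sq_nonneg (G x), hx.1.le]
  -- Step 3: conclude on (0,1]
  have hIoc : ∀ z ∈ Set.Ioc (0:ℝ) 1, G z = 0 := by
    intro z hz
    have h1 : F z ≤ F 0 := hanti ⟨le_refl 0, by norm_num⟩ ⟨hz.1.le, hz.2⟩ hz.1.le
    have hF0 : F 0 = 0 := by simp [hF]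
    have hG0 := (hbd z ⟨hz.1.le, hz.2⟩).1
    have h2 : 0 ≤ F z := by
      have : (0:ℝ) ≤ (G z)^3 := by positivity
      exact mul_nonneg hz.1.le this
    have h3 : F z = 0 := le_antisymm (by linarith) h2
    have h4 : (G z)^3 = 0 := by
      have hzne : z ≠ 0 := ne_of_gt hz.1
      rcases mul_eq_zero.mp h3 with h | h
      · exact absurd h hzne
      · exact h
    exact pow_eq_zero_iff (n := 3) (by norm_num) |>.mp h4
  -- Step 4: z = 0 by continuity
  intro z hz
  rcases eq_or_lt_of_le hz.1 with h0 | h0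
  · have hcw : ContinuousWithinAt G (Set.Icc (0:ℝ) 1) 0 :=
      hcont 0 ⟨le_refl 0, by norm_num⟩
    have ht1 : Filter.Tendsto G (nhdsWithin 0 (Set.Ioc (0:ℝ) 1)) (nhds (G 0)) :=
      hcw.tendsto.mono_left (nhdsWithin_mono _ Set.Ioc_subset_Icc_self)
    have hne : (nhdsWithin (0:ℝ) (Set.Ioc (0:ℝ) 1)).NeBot := by
      exact left_nhdsWithin_Ioc_neBot (by norm_num)
    have ht2 : Filter.Tendsto G (nhdsWithin 0 (Set.Ioc (0:ℝ) 1)) (nhds 0) := by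
      have hev : ∀ᶠ x in nhdsWithin (0:ℝ) (Set.Ioc (0:ℝ) 1), G x = 0 := by
        filter_upwards [self_mem_nhdsWithin] with x hx
        exact hIoc x hx
      exact Filter.Tendsto.congr' (Filter.EventuallyEq.symm hev) tendsto_const_nhds
    rw [← h0]
    exact tendsto_nhds_unique ht1 ht2
  · exact hIoc z ⟨h0, hz.2⟩
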